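/- Every configuration K_1, …, K_m of subspaces of V⊗W with positive integer weights ω_1, …, ω_m admits a unique Harder–Narasimhan filtration: there exists a unique chain of subspaces 0 = V⁰ ⊊ V¹ ⊊ ⋯ ⊊ Vʰ = V such that for each l = 1, …, h the quotient configuration of {K_i} on Vˡ/Vˡ⁻¹ is ℘_ω-semistable (as a configuration of subspaces of (Vˡ/Vˡ⁻¹)⊗W with the same weights ω), and the slopes μ_l = (1/(dim Vˡ − dim Vˡ⁻¹))·Σ_{i=1}^m ω_i·(dim(K_i ∩ (Vˡ⊗W)) − dim(K_i ∩ (Vˡ⁻¹⊗W))) are strictly decreasing: μ_1 > μ_2 > ⋯ > μ_h. -/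

import Mathlib

open scoped TensorProduct
open Module

noncomputable section

variable {V : Type*} [AddCommGroup V] [Module ℂ V]

/-- The image of `H ⊗ W` in `V ⊗ W` under the canonical inclusion, for `H ⊆ V`. -/
def tensorSub (W : Type*) [AddCommGroup W] [Module ℂ W] (H : Submodule ℂ V) :
    Submodule ℂ (V ⊗[ℂ] W) :=
  LinearMap.range (TensorProduct.map H.subtype (LinearMap.id : W →ₗ[ℂ] W))

variable {W : Type*} [AddCommGroup W] [Module ℂ W]

/-- `℘_ω(H) = (1/dim H)·Σ_i ω_i·dim(K_i ∩ (H⊗W))`. -/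
def slopeConfig {m : ℕ} (ω : Fin m → ℕ) (K : Fin m → Submodule ℂ (V ⊗[ℂ] W))
    (H : Submodule ℂ V) : ℚ :=
  (∑ i, (ω i : ℚ) * (finrank ℂ ↥(K i ⊓ tensorSub W H) : ℚ)) / (finrank ℂ ↥H : ℚ)

/-- `℘_ω({K_i}) = (1/dim V)·Σ_i ω_i·dim K_i`. -/
def totalConfig {m : ℕ} (ω : Fin m → ℕ) (K : Fin m → Submodule ℂ (V ⊗[ℂ] W)) : ℚ :=
  (∑ i, (ω i : ℚ) * (finrank ℂ ↥(K i) : ℚ)) / (finrank ℂ V : ℚ)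

/-- The quotient configuration of `{K_i}` on `V''/V'` (for `V' ≤ V''`): the images of
`K_i ∩ (V''⊗W)` under the canonical map `(V⊗W) → (V/V')⊗W`, viewed inside `(V/V')⊗W`. -/
def quotConfig {m : ℕ} (K : Fin m → Submodule ℂ (V ⊗[ℂ] W)) (V' V'' : Submodule ℂ V) :
    Fin m → Submodule ℂ ((V ⧸ V') ⊗[ℂ] W) :=
  fun i => Submodule.map (TensorProduct.map V'.mkQ (LinearMap.id : W →ₗ[ℂ] W))
    (K i ⊓ tensorSub W V'')

/-- `℘_ω`-semistability of the quotient configuration on `V''/V'`, tested against nonzero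
proper subspaces of `V''/V'` (realized as submodules `S` of `V/V'` with `S < V''/V'`). -/
def QuotSemistable {m : ℕ} (ω : Fin m → ℕ) (K : Fin m → Submodule ℂ (V ⊗[ℂ] W))
    (V' V'' : Submodule ℂ V) : Prop :=
  ∀ S : Submodule ℂ (V ⧸ V'), S ≠ ⊥ → S < Submodule.map V'.mkQ V'' →
    (∑ i, (ω i : ℚ) * (finrank ℂ ↥(quotConfig K V' V'' i ⊓ tensorSub W S) : ℚ)) /
        (finrank ℂ ↥S : ℚ) ≤
      (∑ i, (ω i : ℚ) * (finrank ℂ ↥(quotConfig K V' V'' i) : ℚ)) /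
        (finrank ℂ ↥(Submodule.map V'.mkQ V'') : ℚ)

/-- The slope `μ` of the subquotient `V''/V'`:
`(Σ_i ω_i·(dim(K_i ∩ (V''⊗W)) − dim(K_i ∩ (V'⊗W)))) / (dim V'' − dim V')`. -/
def hnSlope {m : ℕ} (ω : Fin m → ℕ) (K : Fin m → Submodule ℂ (V ⊗[ℂ] W))
    (V' V'' : Submodule ℂ V) : ℚ :=
  (∑ i, (ω i : ℚ) * ((finrank ℂ ↥(K i ⊓ tensorSub W V'') : ℚ) -
      (finrank ℂ ↥(K i ⊓ tensorSub W V') : ℚ))) /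
    ((finrank ℂ ↥V'' : ℚ) - (finrank ℂ ↥V' : ℚ))

/-- `c` is a Harder–Narasimhan filtration of the configuration `{K_i}`. -/
def IsHNFiltration {W : Type*} [AddCommGroup W] [Module ℂ W] {m : ℕ} (ω : Fin m → ℕ)
    (K : Fin m → Submodule ℂ (V ⊗[ℂ] W)) {h : ℕ} (c : Fin (h + 1) → Submodule ℂ V) : Prop :=
  c 0 = ⊥ ∧ c (Fin.last h) = ⊤ ∧ StrictMono c ∧
    (∀ l : Fin h, QuotSemistable ω K (c l.castSucc) (c l.succ)) ∧
    (∀ l l' : Fin h, l < l' →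
      hnSlope ω K (c l'.castSucc) (c l'.succ) < hnSlope ω K (c l.castSucc) (c l.succ))

namespace HNaux

variable {ι : Type*} [DecidableEq ι]

theorem mem_tensorSub_iff (b : Basis ι ℂ W) (H : Submodule ℂ V) (x : V ⊗[ℂ] W) :
    x ∈ tensorSub W H ↔ ∀ j, TensorProduct.equivFinsuppOfBasisRight b x j ∈ H := by
  constructor
  · rintro ⟨y, rfl⟩ j
    induction y using TensorProduct.induction_on with
    | zero => simp
    | tmul h w =>
        simp only [TensorProduct.map_tmul, LinearMap.id_coe, id_eq, Submodule.coe_subtype,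
          TensorProduct.equivFinsuppOfBasisRight_apply_tmul_apply]
        exact H.smul_mem _ h.2
    | add y z hy hz =>
        rw [map_add, map_add, Finsupp.add_apply]
        exact H.add_mem hy hz
  · intro hx
    have hrepr : x = ((TensorProduct.equivFinsuppOfBasisRight b) x).sum
        fun j v => v ⊗ₜ[ℂ] b j := by
      conv_lhs => rw [← (TensorProduct.equivFinsuppOfBasisRight b).symm_apply_apply x]
      rw [TensorProduct.equivFinsuppOfBasisRight_symm_apply]
    rw [hrepr]
    refine Submodule.finsuppSum_mem _ _ _ _ fun j _ => ?_
    exact ⟨(⟨_, hx j⟩ : H) ⊗ₜ[ℂ] b j, by simp⟩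

variable {V₂ : Type*} [AddCommGroup V₂] [Module ℂ V₂]

theorem equiv_map_apply (b : Basis ι ℂ W) (φ : V →ₗ[ℂ] V₂) (x : V ⊗[ℂ] W) (j : ι) :
    TensorProduct.equivFinsuppOfBasisRight b
        (TensorProduct.map φ (LinearMap.id : W →ₗ[ℂ] W) x) j =
      φ (TensorProduct.equivFinsuppOfBasisRight b x j) := by
  induction x using TensorProduct.induction_on with
  | zero => simp
  | tmul v w =>
      simp [TensorProduct.map_tmul, TensorProduct.equivFinsuppOfBasisRight_apply_tmul_apply]
  | add y z hy hz => simp [map_add, Finsupp.add_apply, hy, hz]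

end HNaux

namespace HNaux2
open HNaux

variable [FiniteDimensional ℂ W]

theorem tensorSub_mono {H₁ H₂ : Submodule ℂ V} (h : H₁ ≤ H₂) :
    tensorSub W H₁ ≤ tensorSub W H₂ := by
  classical
  intro x hx
  rw [mem_tensorSub_iff (Module.finBasis ℂ W)] at hx ⊢
  exact fun j => h (hx j)

theorem tensorSub_inf (H₁ H₂ : Submodule ℂ V) :
    tensorSub W (H₁ ⊓ H₂) = tensorSub W H₁ ⊓ tensorSub W H₂ := by
  classical
  ext x
  simp only [Submodule.mem_inf, mem_tensorSub_iff (Module.finBasis ℂ W)]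
  exact ⟨fun h => ⟨fun j => (h j).1, fun j => (h j).2⟩, fun h j => ⟨h.1 j, h.2 j⟩⟩

theorem tensorSub_bot : tensorSub W (⊥ : Submodule ℂ V) = ⊥ := by
  classical
  ext x
  simp only [mem_tensorSub_iff (Module.finBasis ℂ W), Submodule.mem_bot]
  constructor
  · intro h
    have : (TensorProduct.equivFinsuppOfBasisRight (Module.finBasis ℂ W)) x = 0 :=
      Finsupp.ext fun j => h j
    simpa using congrArg (TensorProduct.equivFinsuppOfBasisRight (Module.finBasis ℂ W)).symm this
  · rintro rfl; simp

variable {V₂ : Type*} [AddCommGroup V₂] [Module ℂ V₂]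

theorem comap_tensorSub (φ : V →ₗ[ℂ] V₂) (S : Submodule ℂ V₂) :
    Submodule.comap (TensorProduct.map φ (LinearMap.id : W →ₗ[ℂ] W)) (tensorSub W S) =
      tensorSub W (S.comap φ) := by
  classical
  ext x
  simp only [Submodule.mem_comap, mem_tensorSub_iff (Module.finBasis ℂ W),
    equiv_map_apply (Module.finBasis ℂ W)]

theorem ker_map_tensor (φ : V →ₗ[ℂ] V₂) :
    LinearMap.ker (TensorProduct.map φ (LinearMap.id : W →ₗ[ℂ] W)) =
      tensorSub W (LinearMap.ker φ) := by
  calc LinearMap.ker (TensorProduct.map φ (LinearMap.id : W →ₗ[ℂ] W))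
      = Submodule.comap (TensorProduct.map φ (LinearMap.id : W →ₗ[ℂ] W))
          (tensorSub W (⊥ : Submodule ℂ V₂)) := by rw [tensorSub_bot]; rfl
    _ = tensorSub W ((⊥ : Submodule ℂ V₂).comap φ) := comap_tensorSub φ ⊥
    _ = tensorSub W (LinearMap.ker φ) := by rw [Submodule.comap_bot]

theorem map_tensorSub (φ : V →ₗ[ℂ] V₂) (H : Submodule ℂ V) :
    Submodule.map (TensorProduct.map φ (LinearMap.id : W →ₗ[ℂ] W)) (tensorSub W H) =
      tensorSub W (H.map φ) := by
  classical
  set b := Module.finBasis ℂ W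
  apply le_antisymm
  · intro z hz
    rw [Submodule.mem_map] at hz
    obtain ⟨x, hx, rfl⟩ := hz
    rw [mem_tensorSub_iff b] at hx ⊢
    intro j
    rw [equiv_map_apply b]
    exact ⟨_, hx j, rfl⟩
  · intro z hz
    rw [mem_tensorSub_iff b] at hz
    have hrepr : z = ((TensorProduct.equivFinsuppOfBasisRight b) z).sum
        fun j v => v ⊗ₜ[ℂ] b j := by
      conv_lhs => rw [← (TensorProduct.equivFinsuppOfBasisRight b).symm_apply_apply z]
      rw [TensorProduct.equivFinsuppOfBasisRight_symm_apply]
    rw [hrepr]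
    refine Submodule.finsuppSum_mem _ _ _ _ fun j _ => ?_
    obtain ⟨u, hu, huv⟩ := hz j
    refine Submodule.mem_map.2 ⟨u ⊗ₜ[ℂ] b j, ?_, by rw [TensorProduct.map_tmul]; simp [huv]⟩
    rw [mem_tensorSub_iff b]
    intro k
    rw [TensorProduct.equivFinsuppOfBasisRight_apply_tmul_apply]
    exact H.smul_mem _ hu

theorem finrank_tensorSub [FiniteDimensional ℂ V] (H : Submodule ℂ V) :
    finrank ℂ (tensorSub W H) = finrank ℂ H * finrank ℂ W := by
  have hinj : Function.Injective (TensorProduct.map H.subtype (LinearMap.id : W →ₗ[ℂ] W)) := by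
    have : (TensorProduct.map H.subtype (LinearMap.id : W →ₗ[ℂ] W)) =
        LinearMap.rTensor W H.subtype := rfl
    rw [this]
    exact Module.Flat.rTensor_preserves_injective_linearMap _ H.injective_subtype
  have := LinearMap.finrank_range_of_inj hinj
  rw [tensorSub, this, Module.finrank_tensorProduct]

end HNaux2

set_option linter.unusedSectionVars false

namespace HNmain
open HNaux HNaux2

variable [FiniteDimensional ℂ V] [FiniteDimensional ℂ W]
variable {m : ℕ} (ω : Fin m → ℕ) (K : Fin m → Submodule ℂ (V ⊗[ℂ] W))

/-- The numerator function `F(H) = Σ ω_i dim (K_i ⊓ H⊗W)`. -/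
def Fn (H : Submodule ℂ V) : ℚ :=
  ∑ i, (ω i : ℚ) * (finrank ℂ ↥(K i ⊓ tensorSub W H) : ℚ)

/-- Dimension as a rational. -/
def dd (H : Submodule ℂ V) : ℚ := (finrank ℂ ↥H : ℚ)

/-- slope of the "interval" `[U, H]`. -/
def sl (U H : Submodule ℂ V) : ℚ := (Fn ω K H - Fn ω K U) / (dd H - dd U)

theorem dd_mono {U H : Submodule ℂ V} (h : U ≤ H) : dd U ≤ dd H := by
  unfold dd; exact_mod_cast Submodule.finrank_mono h

theorem dd_strict {U H : Submodule ℂ V} (h : U < H) : dd U < dd H := by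
  unfold dd; exact_mod_cast Submodule.finrank_lt_finrank_of_lt h

theorem dd_sub_pos {U H : Submodule ℂ V} (h : U < H) : 0 < dd H - dd U :=
  sub_pos.2 (dd_strict h)

theorem dd_modular (A B : Submodule ℂ V) : dd (A ⊔ B) + dd (A ⊓ B) = dd A + dd B := by
  have := Submodule.finrank_sup_add_finrank_inf_eq A B
  unfold dd
  exact_mod_cast this

theorem dd_bot : dd (⊥ : Submodule ℂ V) = 0 := by simp [dd]

theorem Fn_mono {U H : Submodule ℂ V} (h : U ≤ H) : Fn ω K U ≤ Fn ω K H := by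
  refine Finset.sum_le_sum fun i _ => ?_
  have : finrank ℂ ↥(K i ⊓ tensorSub W U) ≤ finrank ℂ ↥(K i ⊓ tensorSub W H) :=
    Submodule.finrank_mono (inf_le_inf_left _ (tensorSub_mono h))
  have hc : ((finrank ℂ ↥(K i ⊓ tensorSub W U) : ℚ)) ≤ (finrank ℂ ↥(K i ⊓ tensorSub W H) : ℚ) := by
    exact_mod_cast this
  exact mul_le_mul_of_nonneg_left hc (by positivity)

theorem Fn_bot : Fn ω K (⊥ : Submodule ℂ V) = 0 := by
  unfold Fn
  rw [Finset.sum_eq_zero]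
  intro i _
  rw [tensorSub_bot, inf_bot_eq]
  simp

theorem Fn_supermodular (A B : Submodule ℂ V) :
    Fn ω K A + Fn ω K B ≤ Fn ω K (A ⊔ B) + Fn ω K (A ⊓ B) := by
  unfold Fn
  rw [← Finset.sum_add_distrib, ← Finset.sum_add_distrib]
  refine Finset.sum_le_sum fun i _ => ?_
  rw [← mul_add, ← mul_add]
  refine mul_le_mul_of_nonneg_left ?_ (by positivity)
  have key : finrank ℂ ↥(K i ⊓ tensorSub W A) + finrank ℂ ↥(K i ⊓ tensorSub W B) ≤
      finrank ℂ ↥(K i ⊓ tensorSub W (A ⊔ B)) + finrank ℂ ↥(K i ⊓ tensorSub W (A ⊓ B)) := by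
    have heq : finrank ℂ ↥((K i ⊓ tensorSub W A) ⊔ (K i ⊓ tensorSub W B)) +
        finrank ℂ ↥((K i ⊓ tensorSub W A) ⊓ (K i ⊓ tensorSub W B)) =
        finrank ℂ ↥(K i ⊓ tensorSub W A) + finrank ℂ ↥(K i ⊓ tensorSub W B) :=
      Submodule.finrank_sup_add_finrank_inf_eq _ _
    have h1 : (K i ⊓ tensorSub W A) ⊔ (K i ⊓ tensorSub W B) ≤ K i ⊓ tensorSub W (A ⊔ B) :=
      sup_le (inf_le_inf_left _ (tensorSub_mono le_sup_left))
        (inf_le_inf_left _ (tensorSub_mono le_sup_right))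
    have h2 : (K i ⊓ tensorSub W A) ⊓ (K i ⊓ tensorSub W B) = K i ⊓ tensorSub W (A ⊓ B) := by
      rw [tensorSub_inf]
      exact (inf_inf_distrib_left _ _ _).symm
    calc finrank ℂ ↥(K i ⊓ tensorSub W A) + finrank ℂ ↥(K i ⊓ tensorSub W B)
        = finrank ℂ ↥((K i ⊓ tensorSub W A) ⊔ (K i ⊓ tensorSub W B)) +
          finrank ℂ ↥((K i ⊓ tensorSub W A) ⊓ (K i ⊓ tensorSub W B)) := heq.symm
      _ ≤ finrank ℂ ↥(K i ⊓ tensorSub W (A ⊔ B)) + finrank ℂ ↥(K i ⊓ tensorSub W (A ⊓ B)) := by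
          rw [h2]
          exact Nat.add_le_add_right (Submodule.finrank_mono h1) _
  exact_mod_cast key

section Quot

variable {V' V'' H : Submodule ℂ V}

theorem finrank_map_tensor_add (V' : Submodule ℂ V) (T : Submodule ℂ (V ⊗[ℂ] W)) :
    finrank ℂ ↥(T.map (TensorProduct.map V'.mkQ (LinearMap.id : W →ₗ[ℂ] W))) +
      finrank ℂ ↥(T ⊓ tensorSub W V') = finrank ℂ ↥T := by
  set Pz := TensorProduct.map V'.mkQ (LinearMap.id : W →ₗ[ℂ] W) with hPz
  have h1 : T.map Pz = LinearMap.range (Pz.comp T.subtype) := by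
    rw [LinearMap.range_comp, Submodule.range_subtype]
  have hker : LinearMap.ker (Pz.comp T.subtype) =
      Submodule.comap T.subtype (tensorSub W V' ⊓ T) := by
    rw [LinearMap.ker_comp, hPz, ker_map_tensor, Submodule.ker_mkQ, Submodule.comap_inf,
      Submodule.comap_subtype_self, inf_top_eq]
  have h2 := LinearMap.finrank_range_add_finrank_ker (Pz.comp T.subtype)
  rw [hker] at h2
  rw [h1]
  have h3 : finrank ℂ ↥(Submodule.comap T.subtype (tensorSub W V' ⊓ T)) =
      finrank ℂ ↥(T ⊓ tensorSub W V') := by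
    rw [inf_comm (tensorSub W V') T] at *
    exact LinearEquiv.finrank_eq (Submodule.comapSubtypeEquivOfLe inf_le_left)
  rw [h3] at h2
  exact h2

theorem quot_inter_eq (hH1 : V' ≤ H) (hH2 : H ≤ V'') (i : Fin m) :
    quotConfig K V' V'' i ⊓ tensorSub W (H.map V'.mkQ) =
      (K i ⊓ tensorSub W H).map (TensorProduct.map V'.mkQ (LinearMap.id : W →ₗ[ℂ] W)) := by
  apply le_antisymm
  · intro y hy
    obtain ⟨hy1, hy2⟩ := hy
    obtain ⟨x, hx, rfl⟩ := Submodule.mem_map.1 hy1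
    rw [← map_tensorSub] at hy2
    have hx2 : x ∈ tensorSub W H := by
      have hmem : x ∈ Submodule.comap (TensorProduct.map V'.mkQ (LinearMap.id : W →ₗ[ℂ] W))
          (Submodule.map (TensorProduct.map V'.mkQ (LinearMap.id : W →ₗ[ℂ] W))
            (tensorSub W H)) := hy2
      rw [Submodule.comap_map_eq, ker_map_tensor, Submodule.ker_mkQ,
        sup_eq_left.2 (tensorSub_mono hH1)] at hmem
      exact hmem
    exact Submodule.mem_map.2 ⟨x, ⟨hx.1, hx2⟩, rfl⟩
  · refine le_inf (Submodule.map_mono (inf_le_inf_left _ (tensorSub_mono hH2))) ?_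
    refine le_trans (Submodule.map_mono inf_le_right) ?_
    rw [map_tensorSub]

theorem num_quot (hH1 : V' ≤ H) (hH2 : H ≤ V'') :
    (∑ i, (ω i : ℚ) * (finrank ℂ ↥(quotConfig K V' V'' i ⊓ tensorSub W (H.map V'.mkQ)) : ℚ)) =
      Fn ω K H - Fn ω K V' := by
  unfold Fn
  rw [← Finset.sum_sub_distrib]
  refine Finset.sum_congr rfl fun i _ => ?_
  rw [← mul_sub]
  congr 1
  rw [quot_inter_eq (K := K) hH1 hH2 i]
  have h2 : (K i ⊓ tensorSub W H) ⊓ tensorSub W V' = K i ⊓ tensorSub W V' := by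
    rw [inf_assoc, inf_eq_right.2 (tensorSub_mono hH1)]
  have := finrank_map_tensor_add V' (K i ⊓ tensorSub W H)
  rw [h2] at this
  have : (finrank ℂ ↥((K i ⊓ tensorSub W H).map
      (TensorProduct.map V'.mkQ (LinearMap.id : W →ₗ[ℂ] W))) : ℚ) +
      (finrank ℂ ↥(K i ⊓ tensorSub W V') : ℚ) = (finrank ℂ ↥(K i ⊓ tensorSub W H) : ℚ) := by
    exact_mod_cast this
  linarith

theorem quotConfig_inf_self (hV : V' ≤ V'') (i : Fin m) :
    quotConfig K V' V'' i ⊓ tensorSub W (V''.map V'.mkQ) = quotConfig K V' V'' i := by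
  refine inf_eq_left.2 ?_
  refine le_trans (Submodule.map_mono inf_le_right) ?_
  rw [map_tensorSub]

theorem num_quot_total (hV : V' ≤ V'') :
    (∑ i, (ω i : ℚ) * (finrank ℂ ↥(quotConfig K V' V'' i) : ℚ)) = Fn ω K V'' - Fn ω K V' := by
  rw [← num_quot ω K hV (le_refl V'')]
  refine Finset.sum_congr rfl fun i _ => ?_
  rw [quotConfig_inf_self (K := K) hV i]

theorem dd_map_mkQ (hH1 : V' ≤ H) :
    (finrank ℂ ↥(H.map V'.mkQ) : ℚ) = dd H - dd V' := by
  have h1 : H.map V'.mkQ = LinearMap.range (V'.mkQ.comp H.subtype) := by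
    rw [LinearMap.range_comp, Submodule.range_subtype]
  have h2 := LinearMap.finrank_range_add_finrank_ker (V'.mkQ.comp H.subtype)
  have hker : LinearMap.ker (V'.mkQ.comp H.subtype) = Submodule.comap H.subtype V' := by
    rw [LinearMap.ker_comp, Submodule.ker_mkQ]
  rw [hker] at h2
  have h3 : finrank ℂ ↥(Submodule.comap H.subtype V') = finrank ℂ ↥V' :=
    LinearEquiv.finrank_eq (Submodule.comapSubtypeEquivOfLe hH1)
  rw [h3] at h2
  unfold dd
  rw [h1]
  have : (finrank ℂ ↥(LinearMap.range (V'.mkQ.comp H.subtype)) : ℚ) + (finrank ℂ ↥V' : ℚ) =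
      (finrank ℂ ↥H : ℚ) := by exact_mod_cast h2
  linarith

theorem hnSlope_eq (V' V'' : Submodule ℂ V) : hnSlope ω K V' V'' = sl ω K V' V'' := by
  unfold hnSlope sl Fn dd
  rw [← Finset.sum_sub_distrib]
  congr 1
  refine Finset.sum_congr rfl fun i _ => ?_
  rw [mul_sub]

theorem quotSemistable_iff (h : V' < V'') :
    QuotSemistable ω K V' V'' ↔ ∀ H, V' < H → H < V'' → sl ω K V' H ≤ sl ω K V' V'' := by
  have hnum'' := num_quot_total ω K h.le
  have hden'' : (finrank ℂ ↥(V''.map V'.mkQ) : ℚ) = dd V'' - dd V' := dd_map_mkQ h.le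
  constructor
  · intro hq H h1 h2
    have hSne : H.map V'.mkQ ≠ ⊥ := by
      intro he
      have : H ≤ V' := by
        have := Submodule.map_le_iff_le_comap.1 he.le
        rwa [Submodule.comap_bot, Submodule.ker_mkQ] at this
      exact absurd (le_antisymm this h1.le) h1.ne'
    have hSlt : H.map V'.mkQ < V''.map V'.mkQ := by
      refine lt_of_le_of_ne (Submodule.map_mono h2.le) fun he => ?_
      have := congrArg (Submodule.comap V'.mkQ) he
      rw [Submodule.comap_map_eq, Submodule.comap_map_eq, Submodule.ker_mkQ,
        sup_eq_left.2 h1.le, sup_eq_left.2 h.le] at this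
      exact h2.ne this
    have := hq (H.map V'.mkQ) hSne hSlt
    rwa [hnum'', hden'', num_quot ω K h1.le h2.le, dd_map_mkQ h1.le] at this
  · intro hr S hSne hSlt
    set H := S.comap V'.mkQ with hHdef
    have hmapH : H.map V'.mkQ = S := by
      rw [hHdef, Submodule.map_comap_eq, Submodule.range_mkQ, top_inf_eq]
    have h1 : V' < H := by
      refine lt_of_le_of_ne (fun x hx => ?_) fun he => ?_
      · have hx0 : V'.mkQ x = 0 := (Submodule.Quotient.mk_eq_zero V').2 hx
        rw [hHdef, Submodule.mem_comap, hx0]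
        exact S.zero_mem
      · apply hSne
        rw [← hmapH, ← he]
        apply le_bot_iff.1
        rintro y ⟨x, hx, rfl⟩
        simp [(Submodule.Quotient.mk_eq_zero V').2 hx]
    have h2 : H < V'' := by
      refine lt_of_le_of_ne ?_ fun he => hSlt.ne (by rw [← hmapH, he])
      refine le_trans (Submodule.comap_mono hSlt.le) ?_
      rw [Submodule.comap_map_eq, Submodule.ker_mkQ, sup_eq_left.2 h.le]
    have := hr H h1 h2
    rw [hnum'', hden'', ← hmapH, num_quot ω K h1.le h2.le, dd_map_mkQ h1.le]
    exact this

end Quot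

section Dmax

variable {U : Submodule ℂ V}

/-- natural-number numerator. -/
def Nn (H : Submodule ℂ V) : ℕ := ∑ i, ω i * finrank ℂ ↥(K i ⊓ tensorSub W H)

theorem Fn_eq_cast (H : Submodule ℂ V) : Fn ω K H = (Nn ω K H : ℚ) := by
  unfold Fn Nn
  push_cast
  rfl

theorem Nn_le_top (H : Submodule ℂ V) : Nn ω K H ≤ Nn ω K ⊤ :=
  Finset.sum_le_sum fun i _ => Nat.mul_le_mul_left _
    (Submodule.finrank_mono (inf_le_inf_left _ (tensorSub_mono le_top)))

theorem exists_greatest_of_finite {α : Type*} [LinearOrder α] {B : Set α}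
    (hfin : B.Finite) (hne : B.Nonempty) : ∃ s ∈ B, ∀ t ∈ B, t ≤ s := by
  obtain ⟨a, ha, hmax⟩ := Set.Finite.exists_maximalFor id B hfin hne
  exact ⟨a, ha, fun t ht => (le_total t a).elim id fun hle => hmax ht hle⟩

/-- `D` is the maximal destabilizing subspace above `U`. -/
def IsDmax (U D : Submodule ℂ V) : Prop :=
  U < D ∧ (∀ H, U < H → sl ω K U H ≤ sl ω K U D) ∧
    (∀ H, U < H → sl ω K U H = sl ω K U D → H ≤ D)

theorem sl_le_of_max {s : ℚ} (hmax : ∀ H, U < H → sl ω K U H ≤ s) {H : Submodule ℂ V}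
    (hUH : U ≤ H) : Fn ω K H - Fn ω K U ≤ s * (dd H - dd U) := by
  rcases hUH.lt_or_eq with hlt | heq
  · exact (div_le_iff₀ (dd_sub_pos hlt)).1 (hmax H hlt)
  · rw [← heq]
    simp

theorem sl_eq_mul {H : Submodule ℂ V} (hUH : U < H) {s : ℚ} (hs : sl ω K U H = s) :
    Fn ω K H - Fn ω K U = s * (dd H - dd U) :=
  (div_eq_iff (ne_of_gt (dd_sub_pos hUH))).1 hs

theorem sup_maximizer {s : ℚ} (hmax : ∀ H, U < H → sl ω K U H ≤ s) {A B : Submodule ℂ V}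
    (hA : U < A) (hB : U < B) (hsA : sl ω K U A = s) (hsB : sl ω K U B = s) :
    sl ω K U (A ⊔ B) = s := by
  have hUAB : U < A ⊔ B := lt_of_lt_of_le hA le_sup_left
  have h1 : Fn ω K (A ⊓ B) - Fn ω K U ≤ s * (dd (A ⊓ B) - dd U) :=
    sl_le_of_max ω K hmax (le_inf hA.le hB.le)
  have h2 := sl_eq_mul ω K hA hsA
  have h3 := sl_eq_mul ω K hB hsB
  have hsuper := Fn_supermodular ω K A B
  have hddm := dd_modular (V := V) A B
  have hup : s * (dd (A ⊔ B) - dd U) ≤ Fn ω K (A ⊔ B) - Fn ω K U := by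
    have hdd : dd (A ⊔ B) - dd U = (dd A - dd U) + (dd B - dd U) - (dd (A ⊓ B) - dd U) := by
      linarith
    rw [hdd, mul_sub, mul_add]
    linarith
  have hdown : Fn ω K (A ⊔ B) - Fn ω K U ≤ s * (dd (A ⊔ B) - dd U) :=
    sl_le_of_max ω K hmax hUAB.le
  exact (div_eq_iff (ne_of_gt (dd_sub_pos hUAB))).2 (le_antisymm hdown hup)

theorem exists_isDmax (hU : U ≠ ⊤) : ∃ D, IsDmax ω K U D := by
  have hfin : ((fun H => sl ω K U H) '' {H : Submodule ℂ V | U < H}).Finite := by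
    refine Set.Finite.subset (Set.Finite.image
      (fun p : ℕ × ℕ => ((p.1 : ℚ) - Fn ω K U) / ((p.2 : ℚ) - dd U))
      ((Set.finite_Iic (Nn ω K ⊤)).prod (Set.finite_Iic (finrank ℂ V)))) ?_
    rintro q ⟨H, _, rfl⟩
    refine ⟨(Nn ω K H, finrank ℂ ↥H), ⟨Nn_le_top ω K H, Submodule.finrank_le H⟩, ?_⟩
    simp only [sl, dd, Fn_eq_cast]
  have hne : ((fun H => sl ω K U H) '' {H : Submodule ℂ V | U < H}).Nonempty :=
    ⟨_, ⟨⊤, lt_top_iff_ne_top.2 hU, rfl⟩⟩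
  obtain ⟨s, hsA, hsmax⟩ := exists_greatest_of_finite hfin hne
  have hmax : ∀ H, U < H → sl ω K U H ≤ s := fun H hH => hsmax _ ⟨H, hH, rfl⟩
  have hMne : ∃ H : Submodule ℂ V, U < H ∧ sl ω K U H = s := by
    obtain ⟨H, hH, hHs⟩ := hsA
    exact ⟨H, hH, hHs⟩
  obtain ⟨D, hDM, hDall⟩ : ∃ D, (U < D ∧ sl ω K U D = s) ∧
      ∀ H, (U < H ∧ sl ω K U H = s) → finrank ℂ ↥H ≤ finrank ℂ ↥D := by
    have hfin' : ((fun H : Submodule ℂ V => finrank ℂ ↥H) ''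
        {H | U < H ∧ sl ω K U H = s}).Finite :=
      Set.Finite.subset (Set.finite_Iic (finrank ℂ V))
        (by rintro q ⟨H, _, rfl⟩; exact Submodule.finrank_le H)
    have hne' : ((fun H : Submodule ℂ V => finrank ℂ ↥H) ''
        {H | U < H ∧ sl ω K U H = s}).Nonempty := ⟨_, hMne.choose, hMne.choose_spec, rfl⟩
    obtain ⟨n, ⟨D, hD, rfl⟩, hmax'⟩ := exists_greatest_of_finite hfin' hne'
    exact ⟨D, hD, fun H hH => hmax' _ ⟨H, hH, rfl⟩⟩
  refine ⟨D, hDM.1, fun H hH => hDM.2 ▸ hmax H hH, fun H hH hHs => ?_⟩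
  have hsup : sl ω K U (H ⊔ D) = s :=
    sup_maximizer ω K hmax hH hDM.1 (hHs.trans hDM.2) hDM.2
  have hD2 : D = H ⊔ D := Submodule.eq_of_le_of_finrank_le le_sup_right
    (hDall _ ⟨lt_of_lt_of_le hH le_sup_left, hsup⟩)
  exact le_sup_left.trans hD2.ge

theorem isDmax_unique {D₁ D₂ : Submodule ℂ V} (h1 : IsDmax ω K U D₁) (h2 : IsDmax ω K U D₂) :
    D₁ = D₂ := by
  have heq : sl ω K U D₁ = sl ω K U D₂ :=
    le_antisymm (h2.2.1 D₁ h1.1) (h1.2.1 D₂ h2.1)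
  exact le_antisymm (h2.2.2 D₁ h1.1 heq) (h1.2.2 D₂ h2.1 heq.symm)

end Dmax

section Chain

open Classical in
/-- one step of the canonical HN chain. -/
def stepD (U : Submodule ℂ V) : Submodule ℂ V :=
  if h : U = ⊤ then ⊤ else Classical.choose (exists_isDmax ω K h)

theorem stepD_spec {U : Submodule ℂ V} (h : U ≠ ⊤) : IsDmax ω K U (stepD ω K U) := by
  rw [stepD]
  rw [dif_neg h]
  exact Classical.choose_spec (exists_isDmax ω K h)

theorem stepD_top : stepD ω K (⊤ : Submodule ℂ V) = ⊤ := by rw [stepD]; rw [dif_pos rfl]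

/-- the canonical chain. -/
def cc (k : ℕ) : Submodule ℂ V := (stepD ω K)^[k] ⊥

theorem cc_zero : cc ω K 0 = (⊥ : Submodule ℂ V) := rfl

theorem cc_succ (k : ℕ) : cc ω K (k + 1) = stepD ω K (cc ω K k) :=
  Function.iterate_succ_apply' _ _ _

theorem cc_reaches_top : ∃ k, cc ω K k = (⊤ : Submodule ℂ V) := by
  have key : ∀ k, cc ω K k = ⊤ ∨ k ≤ finrank ℂ ↥(cc ω K k) := by
    intro k
    induction k with
    | zero => exact Or.inr (Nat.zero_le _)
    | succ k ih =>
        by_cases htop : cc ω K k = ⊤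
        · left
          rw [cc_succ, htop, stepD_top]
        · rcases ih with h | h
          · exact absurd h htop
          · right
            have hlt : cc ω K k < cc ω K (k + 1) := by
              rw [cc_succ]
              exact (stepD_spec ω K htop).1
            have := Submodule.finrank_lt_finrank_of_lt hlt
            omega
  rcases key (finrank ℂ V) with h | h
  · exact ⟨_, h⟩
  · refine ⟨finrank ℂ V, Submodule.eq_top_of_finrank_eq (le_antisymm (Submodule.finrank_le _) h)⟩

open Classical in
/-- length of the canonical chain. -/
def hlen : ℕ := Nat.find (cc_reaches_top ω K)

open Classical in
theorem cc_hlen_top : cc ω K (hlen ω K) = (⊤ : Submodule ℂ V) := by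
  rw [hlen]; exact Nat.find_spec (cc_reaches_top ω K)

open Classical in
theorem cc_ne_top {k : ℕ} (hk : k < hlen ω K) : cc ω K k ≠ ⊤ := by
  rw [hlen] at hk; exact Nat.find_min (cc_reaches_top ω K) hk

theorem cc_isDmax {k : ℕ} (hk : k < hlen ω K) : IsDmax ω K (cc ω K k) (cc ω K (k + 1)) := by
  rw [cc_succ]
  exact stepD_spec ω K (cc_ne_top ω K hk)

theorem cc_lt_succ {k : ℕ} (hk : k < hlen ω K) : cc ω K k < cc ω K (k + 1) :=
  (cc_isDmax ω K hk).1

theorem cc_strictMono {a b : ℕ} (hab : a < b) (hb : b ≤ hlen ω K) : cc ω K a < cc ω K b := by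
  induction b with
  | zero => omega
  | succ b ih =>
      have hb' : cc ω K b < cc ω K (b + 1) := cc_lt_succ ω K (by omega)
      rcases Nat.lt_or_ge a b with h | h
      · exact lt_trans (ih h (by omega)) hb'
      · have : a = b := by omega
        rw [this]
        exact hb'

theorem slope_consec {k : ℕ} (hk : k + 1 < hlen ω K) :
    sl ω K (cc ω K (k + 1)) (cc ω K (k + 2)) < sl ω K (cc ω K k) (cc ω K (k + 1)) := by
  set U := cc ω K k
  set M := cc ω K (k + 1)
  set M' := cc ω K (k + 2)
  set s := sl ω K U M with hs
  set t := sl ω K M M' with ht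
  by_contra hst
  push_neg at hst
  have hkk : k < hlen ω K := by omega
  have hUM : U < M := cc_lt_succ ω K hkk
  have hMM' : M < M' := cc_lt_succ ω K hk
  have hUM' : U < M' := lt_trans hUM hMM'
  have h2 : Fn ω K M - Fn ω K U = s * (dd M - dd U) := sl_eq_mul ω K hUM rfl
  have h3 : Fn ω K M' - Fn ω K M = t * (dd M' - dd M) := sl_eq_mul ω K hMM' rfl
  have hup : s * (dd M' - dd U) ≤ Fn ω K M' - Fn ω K U := by
    have hpos : 0 < dd M' - dd M := dd_sub_pos hMM'
    nlinarith
  have hdown : Fn ω K M' - Fn ω K U ≤ s * (dd M' - dd U) :=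
    sl_le_of_max ω K (cc_isDmax ω K hkk).2.1 hUM'.le
  have heq : sl ω K U M' = s :=
    (div_eq_iff (ne_of_gt (dd_sub_pos hUM'))).2 (le_antisymm hdown hup)
  have : M' ≤ M := (cc_isDmax ω K hkk).2.2 M' hUM' heq
  exact absurd (lt_of_lt_of_le hMM' this) (lt_irrefl M)

theorem slope_anti {a b : ℕ} (hab : a < b) (hb : b < hlen ω K) :
    sl ω K (cc ω K b) (cc ω K (b + 1)) < sl ω K (cc ω K a) (cc ω K (a + 1)) := by
  induction b with
  | zero => omega
  | succ b ih =>
      rcases Nat.lt_or_ge a b with h | h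
      · exact lt_trans (slope_consec ω K hb) (ih h (by omega))
      · have : a = b := by omega
        rw [this]
        exact slope_consec ω K hb

end Chain

section Unique

theorem step_bound {h' : ℕ} (cs : ℕ → Submodule ℂ V)
    (hlt : ∀ k, k < h' → cs k < cs (k + 1))
    (hss : ∀ k, k < h' → ∀ H, cs k < H → H < cs (k + 1) →
      sl ω K (cs k) H ≤ sl ω K (cs k) (cs (k + 1)))
    {j : ℕ} (hj : j < h') (H : Submodule ℂ V) :
    Fn ω K (H ⊓ cs (j + 1)) - Fn ω K (H ⊓ cs j) ≤
      sl ω K (cs j) (cs (j + 1)) * (dd (H ⊓ cs (j + 1)) - dd (H ⊓ cs j)) := by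
  set sj := sl ω K (cs j) (cs (j + 1)) with hsj
  set A := cs j ⊔ (H ⊓ cs (j + 1)) with hA
  have hAup : A ≤ cs (j + 1) := sup_le (hlt j hj).le inf_le_right
  have hAlo : cs j ≤ A := le_sup_left
  have hinf : cs j ⊓ (H ⊓ cs (j + 1)) = H ⊓ cs j := by
    rw [inf_comm (cs j) _, inf_assoc, inf_eq_right.2 (hlt j hj).le]
  have hsuper : Fn ω K (cs j) + Fn ω K (H ⊓ cs (j + 1)) ≤ Fn ω K A + Fn ω K (H ⊓ cs j) := by
    have := Fn_supermodular ω K (cs j) (H ⊓ cs (j + 1))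
    rwa [hinf] at this
  have hdd : dd A + dd (H ⊓ cs j) = dd (cs j) + dd (H ⊓ cs (j + 1)) := by
    have := dd_modular (cs j) (H ⊓ cs (j + 1))
    rwa [hinf] at this
  have hbound : Fn ω K A - Fn ω K (cs j) ≤ sj * (dd A - dd (cs j)) := by
    rcases hAlo.lt_or_eq with hlt2 | heq2
    · rcases hAup.lt_or_eq with hlt3 | heq3
      · exact (div_le_iff₀ (dd_sub_pos hlt2)).1 (hss j hj A hlt2 hlt3)
      · rw [heq3]
        exact le_of_eq (sl_eq_mul ω K (hlt j hj) hsj.symm)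
    · rw [← heq2]
      simp
  have hddeq : dd A - dd (cs j) = dd (H ⊓ cs (j + 1)) - dd (H ⊓ cs j) := by linarith
  rw [hddeq] at hbound
  linarith

theorem isDmax_of_chain {h' : ℕ} (cs : ℕ → Submodule ℂ V)
    (htop : cs h' = ⊤)
    (hlt : ∀ k, k < h' → cs k < cs (k + 1))
    (hss : ∀ k, k < h' → ∀ H, cs k < H → H < cs (k + 1) →
      sl ω K (cs k) H ≤ sl ω K (cs k) (cs (k + 1)))
    (hsl : ∀ a b, a < b → b < h' → sl ω K (cs b) (cs (b + 1)) < sl ω K (cs a) (cs (a + 1)))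
    {l : ℕ} (hl : l < h') : IsDmax ω K (cs l) (cs (l + 1)) := by
  set s := sl ω K (cs l) (cs (l + 1)) with hs
  have main : ∀ H, cs l < H →
      Fn ω K H - Fn ω K (cs l) ≤ s * (dd H - dd (cs l)) ∧
        (¬H ≤ cs (l + 1) → Fn ω K H - Fn ω K (cs l) < s * (dd H - dd (cs l))) := by
    intro H hH
    have key : ∀ j, l ≤ j → j ≤ h' →
        Fn ω K (H ⊓ cs j) - Fn ω K (cs l) ≤ s * (dd (H ⊓ cs j) - dd (cs l)) ∧
          (¬(H ⊓ cs j) ≤ cs (l + 1) →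
            Fn ω K (H ⊓ cs j) - Fn ω K (cs l) < s * (dd (H ⊓ cs j) - dd (cs l))) := by
      intro j hjl
      induction j, hjl using Nat.le_induction with
      | base =>
          intro _
          have hbase : H ⊓ cs l = cs l := inf_eq_right.2 hH.le
          rw [hbase]
          refine ⟨by simp, fun hc => ?_⟩
          exact absurd (hlt l hl).le hc
      | succ j hjl ih =>
          intro hj1
          have hjh' : j < h' := by omega
          have ihs := ih (by omega)
          have hstep := step_bound ω K cs hlt hss hjh' H
          have hGmono : H ⊓ cs j ≤ H ⊓ cs (j + 1) := inf_le_inf_left H (hlt j hjh').le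
          rcases Nat.lt_or_ge l j with hlj | hlj
          · have hsjs : sl ω K (cs j) (cs (j + 1)) < s := hsl l j hlj hjh'
            rcases hGmono.lt_or_eq with hGlt | hGeq
            · have hdpos : 0 < dd (H ⊓ cs (j + 1)) - dd (H ⊓ cs j) := dd_sub_pos hGlt
              have hstrict : Fn ω K (H ⊓ cs (j + 1)) - Fn ω K (H ⊓ cs j) <
                  s * (dd (H ⊓ cs (j + 1)) - dd (H ⊓ cs j)) :=
                lt_of_le_of_lt hstep (mul_lt_mul_of_pos_right hsjs hdpos)
              have e : s * (dd (H ⊓ cs (j + 1)) - dd (cs l)) =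
                  s * (dd (H ⊓ cs (j + 1)) - dd (H ⊓ cs j)) +
                    s * (dd (H ⊓ cs j) - dd (cs l)) := by ring
              have htot : Fn ω K (H ⊓ cs (j + 1)) - Fn ω K (cs l) <
                  s * (dd (H ⊓ cs (j + 1)) - dd (cs l)) := by
                linarith [ihs.1]
              exact ⟨htot.le, fun _ => htot⟩
            · rw [← hGeq]
              exact ihs
          · have hjeq : j = l := le_antisymm (by omega) hjl
            have hbase : H ⊓ cs j = cs l := by rw [hjeq, inf_eq_right.2 hH.le]
            have hsje : sl ω K (cs j) (cs (j + 1)) = s := by rw [hjeq, hs]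
            rw [hbase, hsje] at hstep
            refine ⟨hstep, fun hc => ?_⟩
            exfalso
            apply hc
            rw [hjeq]
            exact inf_le_right
    have := key h' hl.le le_rfl
    rwa [htop, inf_top_eq] at this
  refine ⟨hlt l hl, fun H hH => ?_, fun H hH hHs => ?_⟩
  · exact (div_le_iff₀ (dd_sub_pos hH)).2 (main H hH).1
  · by_contra hc
    have h1 := (main H hH).2 hc
    have h2 := sl_eq_mul ω K hH hHs
    exact absurd h2 (ne_of_lt h1)

end Unique

end HNmain
/-- existence and uniqueness of the Harder–Narasimhan filtration. -/
theorem stmt_9 (V W : Type*) [AddCommGroup V] [Module ℂ V] [FiniteDimensional ℂ V] [Nontrivial V]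
    [AddCommGroup W] [Module ℂ W] [FiniteDimensional ℂ W] [Nontrivial W]
    (m : ℕ) (hm : 1 ≤ m) (ω : Fin m → ℕ) (hω : ∀ i, 0 < ω i)
    (K : Fin m → Submodule ℂ (V ⊗[ℂ] W)) :
    ∃ (h : ℕ) (c : Fin (h + 1) → Submodule ℂ V),
      IsHNFiltration ω K c ∧
      ∀ (h' : ℕ) (c' : Fin (h' + 1) → Submodule ℂ V),
        IsHNFiltration ω K c' → Set.range c' = Set.range c := by
  classical
  open HNmain in
  refine ⟨hlen ω K, fun l => cc ω K l.val, ⟨?_, ?_, ?_, ?_, ?_⟩, ?_⟩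
  · show cc ω K ((0 : Fin (hlen ω K + 1)).val) = ⊥
    rw [Fin.val_zero]
    exact cc_zero ω K
  · show cc ω K ((Fin.last (hlen ω K)).val) = ⊤
    rw [Fin.val_last]
    exact cc_hlen_top ω K
  · intro a b hab
    exact cc_strictMono ω K (show a.val < b.val from hab) (by omega)
  · intro l
    show QuotSemistable ω K (cc ω K l.castSucc.val) (cc ω K l.succ.val)
    rw [Fin.coe_castSucc, Fin.val_succ]
    refine (quotSemistable_iff ω K (cc_lt_succ ω K l.isLt)).2 fun H h1 _ => ?_
    exact (cc_isDmax ω K l.isLt).2.1 H h1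
  · intro l l' hll'
    show hnSlope ω K (cc ω K l'.castSucc.val) (cc ω K l'.succ.val) <
      hnSlope ω K (cc ω K l.castSucc.val) (cc ω K l.succ.val)
    rw [Fin.coe_castSucc, Fin.val_succ, Fin.coe_castSucc, Fin.val_succ,
      hnSlope_eq, hnSlope_eq]
    exact slope_anti ω K (show l.val < l'.val from hll') l'.isLt
  · intro h' c' hc'
    obtain ⟨hc0, hctop, hcmono, hcss, hcsl⟩ := hc'
    set cs : ℕ → Submodule ℂ V := fun k => c' ⟨min k h', by omega⟩ with hcs
    have hcsk : ∀ k (hk : k ≤ h'), cs k = c' ⟨k, by omega⟩ := by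
      intro k hk
      simp only [hcs]
      congr 1
      exact Fin.ext (by simp [Nat.min_eq_left hk])
    have hlt : ∀ k, k < h' → cs k < cs (k + 1) := by
      intro k hk
      rw [hcsk k hk.le, hcsk (k + 1) hk]
      exact hcmono (Fin.mk_lt_mk.2 (by omega))
    have htop' : cs h' = ⊤ := by
      rw [hcsk h' le_rfl]
      rw [show (⟨h', by omega⟩ : Fin (h' + 1)) = Fin.last h' from Fin.ext rfl]
      exact hctop
    have hss : ∀ k, k < h' → ∀ H, cs k < H → H < cs (k + 1) →
        sl ω K (cs k) H ≤ sl ω K (cs k) (cs (k + 1)) := by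
      intro k hk
      have hq := hcss ⟨k, hk⟩
      have e1 : c' (Fin.castSucc ⟨k, hk⟩) = cs k := by
        rw [hcsk k hk.le]
        congr 1
      have e2 : c' (Fin.succ ⟨k, hk⟩) = cs (k + 1) := by
        rw [hcsk (k + 1) hk]
        congr 1
      rw [e1, e2] at hq
      exact fun H h1 h2 => (quotSemistable_iff ω K (hlt k hk)).1 hq H h1 h2
    have hsl' : ∀ a b, a < b → b < h' →
        sl ω K (cs b) (cs (b + 1)) < sl ω K (cs a) (cs (a + 1)) := by
      intro a b hab hb
      have hq := hcsl ⟨a, by omega⟩ ⟨b, hb⟩ (Fin.mk_lt_mk.2 hab)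
      have e1 : c' (Fin.castSucc ⟨a, by omega⟩) = cs a := by
        rw [hcsk a (by omega)]; congr 1
      have e2 : c' (Fin.succ ⟨a, by omega⟩) = cs (a + 1) := by
        rw [hcsk (a + 1) (by omega)]; congr 1
      have e3 : c' (Fin.castSucc ⟨b, hb⟩) = cs b := by
        rw [hcsk b (by omega)]; congr 1
      have e4 : c' (Fin.succ ⟨b, hb⟩) = cs (b + 1) := by
        rw [hcsk (b + 1) (by omega)]; congr 1
      rw [e1, e2, e3, e4, hnSlope_eq, hnSlope_eq] at hq
      exact hq
    have hDm : ∀ k, k < h' → IsDmax ω K (cs k) (cs (k + 1)) :=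
      fun k hk => isDmax_of_chain ω K cs htop' hlt hss hsl' hk
    have hagree : ∀ k, k ≤ min h' (hlen ω K) → cs k = cc ω K k := by
      intro k hk
      induction k with
      | zero =>
          rw [hcsk 0 (by omega), cc_zero]
          rw [show (⟨0, by omega⟩ : Fin (h' + 1)) = 0 from Fin.ext rfl]
          exact hc0
      | succ k ih =>
          have h1 : k < h' := by omega
          have h2 : k < hlen ω K := by omega
          have heq := ih (by omega)
          have hd2 := cc_isDmax ω K h2
          rw [← heq] at hd2
          exact isDmax_unique ω K (hDm k h1) hd2
    have hh : h' = hlen ω K := by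
      by_contra hne
      rcases Nat.lt_or_ge h' (hlen ω K) with hlt' | hge
      · have := hagree h' (by omega)
        rw [htop'] at this
        exact cc_ne_top ω K hlt' this.symm
      · have hlt'' : hlen ω K < h' := by omega
        have heq := hagree (hlen ω K) (by omega)
        rw [cc_hlen_top] at heq
        have hmono := hlt (hlen ω K) hlt''
        rw [heq] at hmono
        exact absurd hmono not_top_lt
    subst hh
    have hfun : c' = fun l : Fin (hlen ω K + 1) => cc ω K l.val := by
      funext l
      have heq := hagree l.val (by omega)
      rw [hcsk l.val (by omega)] at heq
      rw [← heq]
    rw [hfun]
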